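/- Gottesman's generators on 2^{2k+3} qubits, namely X_{U_k} = X^{⊗2^{2k+3}}, Z_{U_k} = Z^{⊗2^{2k+3}}, and S_j^k = X^{h_j} Z^{h_{j-1} + h_1 + h_{2k+3}} for j ∈ [2k+3] (where h_j is the j-th row of the (2k+3) × 2^{2k+3} binary matrix whose i-th column is the binary representation of i, and h_0 = 0), form a set of 2k+5 commuting Pauli operators. -/

import Mathlib

open Matrix Finset

/-- The `N`-qubit Pauli operator `X^u Z^v`: it maps `|y⟩` to `(-1)^{v·y} |y+u⟩`. -/
noncomputable def XZop (N : ℕ) (u v : Fin N → ZMod 2) :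
    Matrix (Fin N → ZMod 2) (Fin N → ZMod 2) ℂ :=
  fun z y => if z = y + u then (-1 : ℂ) ^ (∑ i, (v i * y i).val) else 0

/-- `hrow k j` is the `j`-th row `h_j` of the `(2k+3) × 2^{2k+3}` binary matrix
whose `i`-th column is the binary representation of `i`; `h_0 = 0`. -/
def hrow (k j : ℕ) (i : Fin (2 ^ (2 * k + 3))) : ZMod 2 :=
  if j = 0 then 0 else ((((i : ℕ) / 2 ^ (j - 1)) % 2 : ℕ) : ZMod 2)

/-- Gottesman's generator `S_j^k = X^{h_j} Z^{h_{j-1} + h_1 + h_{2k+3}}`. -/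
noncomputable def Sgen (k j : ℕ) :
    Matrix (Fin (2 ^ (2 * k + 3)) → ZMod 2) (Fin (2 ^ (2 * k + 3)) → ZMod 2) ℂ :=
  XZop (2 ^ (2 * k + 3)) (hrow k j) (hrow k (j - 1) + hrow k 1 + hrow k (2 * k + 3))

/-- The family of `2k+5` generators: `X_{U_k} = X^{⊗N}`, `Z_{U_k} = Z^{⊗N}`,
and `S_1^k, …, S_{2k+3}^k`. -/
noncomputable def fam (k : ℕ) : Fin (2 * k + 5) →
    Matrix (Fin (2 ^ (2 * k + 3)) → ZMod 2) (Fin (2 ^ (2 * k + 3)) → ZMod 2) ℂ :=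
  fun j =>
    if (j : ℕ) = 0 then XZop (2 ^ (2 * k + 3)) 1 0
    else if (j : ℕ) = 1 then XZop (2 ^ (2 * k + 3)) 0 1
    else Sgen k ((j : ℕ) - 1)

/-! ### Auxiliary lemmas -/

lemma neg_one_pow_mod (a : ℕ) : ((-1 : ℂ)) ^ a = (-1) ^ (a % 2) := by
  conv_lhs => rw [← Nat.div_add_mod a 2, pow_add, pow_mul, neg_one_sq, one_pow, one_mul]

lemma neg_one_pow_congr' {a b : ℕ} (h : (a : ZMod 2) = (b : ZMod 2)) :
    ((-1 : ℂ)) ^ a = (-1) ^ b := by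
  have h2 : a % 2 = b % 2 := (ZMod.natCast_eq_natCast_iff a b 2).mp h
  rw [neg_one_pow_mod a, neg_one_pow_mod b, h2]

lemma cast_exp_sum {N : ℕ} (v x : Fin N → ZMod 2) :
    ((∑ i, (v i * x i).val : ℕ) : ZMod 2) = ∑ i, v i * x i := by
  push_cast
  refine Finset.sum_congr rfl fun i _ => ?_
  rw [ZMod.natCast_val, ZMod.cast_id]

lemma XZop_mul_apply (N : ℕ) (u v u' v' : Fin N → ZMod 2) (z y : Fin N → ZMod 2) :
    (XZop N u v * XZop N u' v') z y =
      if z = y + u' + u then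
        (-1 : ℂ) ^ (∑ i, (v i * (y + u') i).val) * (-1 : ℂ) ^ (∑ i, (v' i * y i).val)
      else 0 := by
  rw [Matrix.mul_apply, Finset.sum_eq_single (y + u')]
  · simp [XZop]
  · intro x _ hx
    simp [XZop, hx]
  · simp

lemma XZop_comm (N : ℕ) (u v u' v' : Fin N → ZMod 2)
    (h : ∑ i, v i * u' i = ∑ i, v' i * u i) :
    Commute (XZop N u v) (XZop N u' v') := by
  unfold Commute SemiconjBy
  ext z y
  rw [XZop_mul_apply, XZop_mul_apply]
  have hcond : y + u' + u = y + u + u' := by ring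
  rw [hcond]
  split_ifs with hz
  · rw [← pow_add, ← pow_add]
    apply neg_one_pow_congr'
    rw [Nat.cast_add, Nat.cast_add, cast_exp_sum, cast_exp_sum, cast_exp_sum, cast_exp_sum]
    simp only [Pi.add_apply, mul_add]
    rw [Finset.sum_add_distrib, Finset.sum_add_distrib, h]
    ring
  · rfl

/-- flipping bit `c` as a map on `Fin (2^(2k+3))` -/
def xr (k c : ℕ) (hc : c < 2 * k + 3) (i : Fin (2 ^ (2 * k + 3))) : Fin (2 ^ (2 * k + 3)) :=
  ⟨(i : ℕ) ^^^ 2 ^ c, Nat.xor_lt_two_pow i.isLt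
    (Nat.pow_lt_pow_right (by norm_num) hc)⟩

lemma div_mod_xor (x c a : ℕ) (h : a ≠ c) : (x ^^^ 2 ^ c) / 2 ^ a % 2 = x / 2 ^ a % 2 := by
  have h1 : (x ^^^ 2 ^ c).testBit a = x.testBit a := by
    rw [Nat.testBit_xor, Nat.testBit_two_pow_of_ne (Ne.symm h)]
    simp
  rw [Nat.testBit_eq_decide_div_mod_eq, Nat.testBit_eq_decide_div_mod_eq, decide_eq_decide] at h1
  have h2 : (x ^^^ 2 ^ c) / 2 ^ a % 2 < 2 := Nat.mod_lt _ (by norm_num)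
  have h3 : x / 2 ^ a % 2 < 2 := Nat.mod_lt _ (by norm_num)
  omega

lemma hrow_xr (k m c : ℕ) (hm : m ≠ c + 1) (hc : c < 2 * k + 3)
    (i : Fin (2 ^ (2 * k + 3))) : hrow k m (xr k c hc i) = hrow k m i := by
  unfold hrow xr
  split_ifs with h0
  · rfl
  · simp only []
    rw [div_mod_xor _ _ _ (by omega)]

lemma sum_zero_of_invariant (k c : ℕ) (hc : c < 2 * k + 3)
    (F : Fin (2 ^ (2 * k + 3)) → ZMod 2)
    (hF : ∀ i, F (xr k c hc i) = F i) : ∑ i, F i = 0 := by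
  apply Finset.sum_ninvolution (xr k c hc)
  · intro i
    rw [hF, ← two_mul]
    exact mul_eq_zero_of_left (by decide) _
  · intro i _
    apply Fin.ne_of_val_ne
    intro h
    have h2 : ((i : ℕ) ^^^ 2 ^ c) ^^^ (i : ℕ) = (i : ℕ) ^^^ (i : ℕ) :=
      congrArg (· ^^^ (i : ℕ)) h
    rw [Nat.xor_comm (i : ℕ) (2 ^ c), xor_cancel_right, Nat.xor_self] at h2
    exact absurd h2 (Nat.pos_iff_ne_zero.mp (Nat.pow_pos (n := c) (by norm_num)))
  · intro i; exact Finset.mem_univ _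
  · intro i
    apply Fin.ext
    exact xor_cancel_right _ _

lemma hdot (k a b : ℕ) :
    ∑ t : Fin (2 ^ (2 * k + 3)), hrow k a t * hrow k b t = 0 := by
  obtain ⟨c, hc3, ha, hb⟩ : ∃ c, c < 3 ∧ a ≠ c + 1 ∧ b ≠ c + 1 := by
    refine ⟨if a = 1 then if b = 2 then 2 else 1
      else if b = 1 then if a = 2 then 2 else 1 else 0, ?_⟩
    split_ifs <;> omega
  have hc : c < 2 * k + 3 := by omega
  apply sum_zero_of_invariant k c hc
  intro i
  rw [hrow_xr k a c ha hc, hrow_xr k b c hb hc]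

lemma hrowsum (k a : ℕ) : ∑ t : Fin (2 ^ (2 * k + 3)), hrow k a t = 0 := by
  have h2 : ∀ x : ZMod 2, x * x = x := by decide
  calc ∑ t : Fin (2 ^ (2 * k + 3)), hrow k a t
      = ∑ t : Fin (2 ^ (2 * k + 3)), hrow k a t * hrow k a t := by simp [h2]
    _ = 0 := hdot k a a

lemma sumone (k : ℕ) : ∑ _t : Fin (2 ^ (2 * k + 3)), (1 : ZMod 2) = 0 := by
  simp only [Finset.sum_const, Finset.card_univ, Fintype.card_fin, nsmul_eq_mul, mul_one]
  push_cast
  rw [show ((2 : ZMod 2)) = 0 by decide]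
  exact zero_pow (by omega)

theorem stmt_19 (k : ℕ) : ∀ i j, Commute (fam k i) (fam k j) := by
  intro i j
  unfold fam Sgen
  split_ifs <;>
  · apply XZop_comm
    simp only [Pi.add_apply, Pi.zero_apply, Pi.one_apply, zero_mul, mul_zero, mul_one, one_mul,
      add_mul, mul_add, Finset.sum_add_distrib, Finset.sum_const_zero, hdot, hrowsum, sumone,
      add_zero, zero_add]
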